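/- Let a, c : ℝ → ℝ be C² functions and define F : ℝ² → ℝ⁵ by F(u,θ) = (a(u)cos θ, a(u)sin θ, u·a(u)cos 2θ, u·a(u)sin 2θ, c(u)). Then for every (u,θ) ∈ ℝ², the determinant of the 5×5 matrix whose rows are, in order, ∂_uF, ∂_θF, ∂_{uu}F, ∂_{uθ}F, ∂_{θθ}F (all evaluated at (u,θ)) equals −2·a(u)³·H(u), where H(u) = (a(u) − 3u·a'(u))·c''(u) + (3u·a''(u) − 2a'(u))·c'(u). In particular, the five derivative vectors of F at (u,θ) are linearly independent if and only if a(u) ≠ 0 and H(u) ≠ 0. -/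

import Mathlib

set_option maxRecDepth 10000

open Real

set_option maxHeartbeats 2000000 in
private lemma det5_aux (A A1 A2 C1 C2 u ct st c2 s2 : ℝ)
    (h1 : st ^ 2 + ct ^ 2 = 1) (h2 : s2 ^ 2 + c2 ^ 2 = 1) :
    (Matrix.of ![
      ![A1 * ct, A1 * st, (A + u * A1) * c2, (A + u * A1) * s2, C1],
      ![-(A * st), A * ct, -(2 * (u * A) * s2), 2 * (u * A) * c2, 0],
      ![A2 * ct, A2 * st, (2 * A1 + u * A2) * c2, (2 * A1 + u * A2) * s2, C2],
      ![-(A1 * st), A1 * ct, -(2 * (A + u * A1) * s2), 2 * (A + u * A1) * c2, 0],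
      ![-(A * ct), -(A * st), -(4 * (u * A) * c2), -(4 * (u * A) * s2), 0]]).det
    = -2 * A ^ 3 * ((A - 3 * u * A1) * C2 + (3 * u * A2 - 2 * A1) * C1) := by
  simp only [Matrix.det_succ_row_zero, Fin.sum_univ_succ, Fin.sum_univ_zero,
    Matrix.det_fin_one, Matrix.submatrix_apply, Matrix.submatrix_submatrix,
    Function.comp_apply, Fin.zero_succAbove, Fin.succ_succAbove_zero,
    Fin.succ_succAbove_succ, Matrix.of_apply, Matrix.cons_val_zero, Matrix.cons_val_succ,
    Fin.val_succ, Fin.val_zero, Matrix.det_fin_zero, add_zero, Matrix.cons_val', Matrix.head_cons,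
    Matrix.head_fin_const, Matrix.cons_val_fin_one, Fin.val_eq_zero]
  linear_combination ((s2 ^ 2 + c2 ^ 2) *
      (-6 * A ^ 3 * A2 * C1 * u + 6 * A ^ 3 * A1 * C2 * u + 4 * A ^ 3 * A1 * C1 - 2 * A ^ 4 * C2)) * h1
    + (-6 * A ^ 3 * A2 * C1 * u + 6 * A ^ 3 * A1 * C2 * u + 4 * A ^ 3 * A1 * C1 - 2 * A ^ 4 * C2) * h2

theorem osculating_det_rot_ansatz (a c : ℝ → ℝ)
    (ha : ContDiff ℝ 2 a) (hc : ContDiff ℝ 2 c)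
    (F : ℝ → ℝ → Fin 5 → ℝ)
    (hF : ∀ u θ, F u θ =
      ![a u * cos θ, a u * sin θ, u * a u * cos (2 * θ), u * a u * sin (2 * θ), c u])
    (u θ : ℝ) :
    (Matrix.of
      ![deriv (fun u' => F u' θ) u,
        deriv (fun θ' => F u θ') θ,
        deriv (fun u' => deriv (fun u'' => F u'' θ) u') u,
        deriv (fun θ' => deriv (fun u' => F u' θ') u) θ,
        deriv (fun θ' => deriv (fun θ'' => F u θ'') θ') θ]).det
      = -2 * (a u) ^ 3 *
        ((a u - 3 * u * deriv a u) * deriv (deriv c) u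
          + (3 * u * deriv (deriv a) u - 2 * deriv a u) * deriv c u)
    ∧ (LinearIndependent ℝ
        ![deriv (fun u' => F u' θ) u,
          deriv (fun θ' => F u θ') θ,
          deriv (fun u' => deriv (fun u'' => F u'' θ) u') u,
          deriv (fun θ' => deriv (fun u' => F u' θ') u) θ,
          deriv (fun θ' => deriv (fun θ'' => F u θ'') θ') θ]
        ↔ a u ≠ 0 ∧
          (a u - 3 * u * deriv a u) * deriv (deriv c) u
            + (3 * u * deriv (deriv a) u - 2 * deriv a u) * deriv c u ≠ 0) := by
  -- differentiability facts
  have ha2 : ContDiff ℝ (1 + 1) a := by norm_num at ha ⊢; exact ha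
  have hc2 : ContDiff ℝ (1 + 1) c := by norm_num at hc ⊢; exact hc
  have hda : ∀ x, HasDerivAt a (deriv a x) x := fun x =>
    ((ha.differentiable (by norm_num)) x).hasDerivAt
  have hdc : ∀ x, HasDerivAt c (deriv c x) x := fun x =>
    ((hc.differentiable (by norm_num)) x).hasDerivAt
  have hda' : ∀ x, HasDerivAt (deriv a) (deriv (deriv a) x) x := fun x =>
    (((contDiff_succ_iff_deriv.mp ha2).2.2.differentiable (by norm_num)) x).hasDerivAt
  have hdc' : ∀ x, HasDerivAt (deriv c) (deriv (deriv c) x) x := fun x =>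
    (((contDiff_succ_iff_deriv.mp hc2).2.2.differentiable (by norm_num)) x).hasDerivAt
  -- derivative in u of F
  have L1 : ∀ (φ x : ℝ), HasDerivAt
      (fun t => (![a t * cos φ, a t * sin φ, t * a t * cos (2 * φ), t * a t * sin (2 * φ), c t] :
        Fin 5 → ℝ))
      (![deriv a x * cos φ, deriv a x * sin φ, (a x + x * deriv a x) * cos (2 * φ),
        (a x + x * deriv a x) * sin (2 * φ), deriv c x]) x := by
    intro φ x
    refine hasDerivAt_pi.2 fun i => ?_
    fin_cases i <;>
      simp only [Matrix.cons_val_zero, Matrix.cons_val_one, Matrix.head_cons,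
        Matrix.cons_val_two, Matrix.cons_val_three, Matrix.cons_val_four,
        Matrix.tail_cons, Fin.mk_zero, Fin.mk_one, Fin.isValue]
    · exact (hda x).mul_const _
    · exact (hda x).mul_const _
    · have h := ((hasDerivAt_id x).mul (hda x)).mul_const (cos (2 * φ))
      rw [show (a x + x * deriv a x) * cos (2 * φ)
          = (1 * a x + x * deriv a x) * cos (2 * φ) by ring]
      exact h
    · have h := ((hasDerivAt_id x).mul (hda x)).mul_const (sin (2 * φ))
      rw [show (a x + x * deriv a x) * sin (2 * φ)
          = (1 * a x + x * deriv a x) * sin (2 * φ) by ring]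
      exact h
    · exact hdc x
  -- derivative in θ of F
  have L2 : ∀ x : ℝ, HasDerivAt
      (fun t => (![a u * cos t, a u * sin t, u * a u * cos (2 * t), u * a u * sin (2 * t), c u] :
        Fin 5 → ℝ))
      (![-(a u * sin x), a u * cos x, -(2 * (u * a u) * sin (2 * x)),
        2 * (u * a u) * cos (2 * x), 0]) x := by
    intro x
    have h2t : HasDerivAt (fun t : ℝ => 2 * t) 2 x := by
      simpa using (hasDerivAt_id x).const_mul (2 : ℝ)
    refine hasDerivAt_pi.2 fun i => ?_
    fin_cases i <;>
      simp only [Matrix.cons_val_zero, Matrix.cons_val_one, Matrix.head_cons,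
        Matrix.cons_val_two, Matrix.cons_val_three, Matrix.cons_val_four,
        Matrix.tail_cons, Fin.mk_zero, Fin.mk_one, Fin.isValue]
    · have h := (hasDerivAt_cos x).const_mul (a u)
      rw [show -(a u * sin x) = a u * -sin x by ring]; exact h
    · exact (hasDerivAt_sin x).const_mul (a u)
    · have h := ((hasDerivAt_cos (2 * x)).comp x h2t).const_mul (u * a u)
      rw [show -(2 * (u * a u) * sin (2 * x)) = u * a u * (-sin (2 * x) * 2) by ring]; exact h
    · have h := ((hasDerivAt_sin (2 * x)).comp x h2t).const_mul (u * a u)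
      rw [show 2 * (u * a u) * cos (2 * x) = u * a u * (cos (2 * x) * 2) by ring]; exact h
    · exact hasDerivAt_const x (c u)
  -- derivative in u of ∂_u F
  have L3 : ∀ (φ x : ℝ), HasDerivAt
      (fun t => (![deriv a t * cos φ, deriv a t * sin φ, (a t + t * deriv a t) * cos (2 * φ),
        (a t + t * deriv a t) * sin (2 * φ), deriv c t] : Fin 5 → ℝ))
      (![deriv (deriv a) x * cos φ, deriv (deriv a) x * sin φ,
        (2 * deriv a x + x * deriv (deriv a) x) * cos (2 * φ),
        (2 * deriv a x + x * deriv (deriv a) x) * sin (2 * φ), deriv (deriv c) x]) x := by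
    intro φ x
    refine hasDerivAt_pi.2 fun i => ?_
    fin_cases i <;>
      simp only [Matrix.cons_val_zero, Matrix.cons_val_one, Matrix.head_cons,
        Matrix.cons_val_two, Matrix.cons_val_three, Matrix.cons_val_four,
        Matrix.tail_cons, Fin.mk_zero, Fin.mk_one, Fin.isValue]
    · exact (hda' x).mul_const _
    · exact (hda' x).mul_const _
    · have h := ((hda x).add ((hasDerivAt_id x).mul (hda' x))).mul_const (cos (2 * φ))
      rw [show (2 * deriv a x + x * deriv (deriv a) x) * cos (2 * φ)
          = (deriv a x + (1 * deriv a x + x * deriv (deriv a) x)) * cos (2 * φ) by ring]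
      exact h
    · have h := ((hda x).add ((hasDerivAt_id x).mul (hda' x))).mul_const (sin (2 * φ))
      rw [show (2 * deriv a x + x * deriv (deriv a) x) * sin (2 * φ)
          = (deriv a x + (1 * deriv a x + x * deriv (deriv a) x)) * sin (2 * φ) by ring]
      exact h
    · exact hdc' x
  -- derivative in θ of ∂_u F
  have L4 : ∀ x : ℝ, HasDerivAt
      (fun t => (![deriv a u * cos t, deriv a u * sin t, (a u + u * deriv a u) * cos (2 * t),
        (a u + u * deriv a u) * sin (2 * t), deriv c u] : Fin 5 → ℝ))
      (![-(deriv a u * sin x), deriv a u * cos x, -(2 * (a u + u * deriv a u) * sin (2 * x)),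
        2 * (a u + u * deriv a u) * cos (2 * x), 0]) x := by
    intro x
    have h2t : HasDerivAt (fun t : ℝ => 2 * t) 2 x := by
      simpa using (hasDerivAt_id x).const_mul (2 : ℝ)
    refine hasDerivAt_pi.2 fun i => ?_
    fin_cases i <;>
      simp only [Matrix.cons_val_zero, Matrix.cons_val_one, Matrix.head_cons,
        Matrix.cons_val_two, Matrix.cons_val_three, Matrix.cons_val_four,
        Matrix.tail_cons, Fin.mk_zero, Fin.mk_one, Fin.isValue]
    · have h := (hasDerivAt_cos x).const_mul (deriv a u)
      rw [show -(deriv a u * sin x) = deriv a u * -sin x by ring]; exact h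
    · exact (hasDerivAt_sin x).const_mul (deriv a u)
    · have h := ((hasDerivAt_cos (2 * x)).comp x h2t).const_mul (a u + u * deriv a u)
      rw [show -(2 * (a u + u * deriv a u) * sin (2 * x))
          = (a u + u * deriv a u) * (-sin (2 * x) * 2) by ring]
      exact h
    · have h := ((hasDerivAt_sin (2 * x)).comp x h2t).const_mul (a u + u * deriv a u)
      rw [show 2 * (a u + u * deriv a u) * cos (2 * x)
          = (a u + u * deriv a u) * (cos (2 * x) * 2) by ring]
      exact h
    · exact hasDerivAt_const x (deriv c u)
  -- derivative in θ of ∂_θ F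
  have L5 : ∀ x : ℝ, HasDerivAt
      (fun t => (![-(a u * sin t), a u * cos t, -(2 * (u * a u) * sin (2 * t)),
        2 * (u * a u) * cos (2 * t), 0] : Fin 5 → ℝ))
      (![-(a u * cos x), -(a u * sin x), -(4 * (u * a u) * cos (2 * x)),
        -(4 * (u * a u) * sin (2 * x)), 0]) x := by
    intro x
    have h2t : HasDerivAt (fun t : ℝ => 2 * t) 2 x := by
      simpa using (hasDerivAt_id x).const_mul (2 : ℝ)
    refine hasDerivAt_pi.2 fun i => ?_
    fin_cases i <;>
      simp only [Matrix.cons_val_zero, Matrix.cons_val_one, Matrix.head_cons,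
        Matrix.cons_val_two, Matrix.cons_val_three, Matrix.cons_val_four,
        Matrix.tail_cons, Fin.mk_zero, Fin.mk_one, Fin.isValue]
    · exact ((hasDerivAt_sin x).const_mul (a u)).neg
    · have h := (hasDerivAt_cos x).const_mul (a u)
      rw [show -(a u * sin x) = a u * -sin x by ring]; exact h
    · have h := (((hasDerivAt_sin (2 * x)).comp x h2t).const_mul (2 * (u * a u))).neg
      rw [show -(4 * (u * a u) * cos (2 * x)) = -(2 * (u * a u) * (cos (2 * x) * 2)) by ring]
      exact h
    · have h := ((hasDerivAt_cos (2 * x)).comp x h2t).const_mul (2 * (u * a u))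
      rw [show -(4 * (u * a u) * sin (2 * x)) = 2 * (u * a u) * (-sin (2 * x) * 2) by ring]
      exact h
    · exact hasDerivAt_const x (0 : ℝ)
  -- identify the five rows
  have e1 : deriv (fun u' => F u' θ) u
      = ![deriv a u * cos θ, deriv a u * sin θ, (a u + u * deriv a u) * cos (2 * θ),
        (a u + u * deriv a u) * sin (2 * θ), deriv c u] := by
    simp only [hF]; exact (L1 θ u).deriv
  have e2 : deriv (fun θ' => F u θ') θ
      = ![-(a u * sin θ), a u * cos θ, -(2 * (u * a u) * sin (2 * θ)),
        2 * (u * a u) * cos (2 * θ), 0] := by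
    simp only [hF]; exact (L2 θ).deriv
  have inner1 : ∀ φ : ℝ, (fun u' => deriv (fun u'' => F u'' φ) u')
      = fun u' => (![deriv a u' * cos φ, deriv a u' * sin φ,
        (a u' + u' * deriv a u') * cos (2 * φ),
        (a u' + u' * deriv a u') * sin (2 * φ), deriv c u'] : Fin 5 → ℝ) := by
    intro φ; funext u'; simp only [hF]; exact (L1 φ u').deriv
  have e3 : deriv (fun u' => deriv (fun u'' => F u'' θ) u') u
      = ![deriv (deriv a) u * cos θ, deriv (deriv a) u * sin θ,
        (2 * deriv a u + u * deriv (deriv a) u) * cos (2 * θ),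
        (2 * deriv a u + u * deriv (deriv a) u) * sin (2 * θ), deriv (deriv c) u] := by
    rw [inner1 θ]; exact (L3 θ u).deriv
  have e4 : deriv (fun θ' => deriv (fun u' => F u' θ') u) θ
      = ![-(deriv a u * sin θ), deriv a u * cos θ,
        -(2 * (a u + u * deriv a u) * sin (2 * θ)),
        2 * (a u + u * deriv a u) * cos (2 * θ), 0] := by
    have : (fun θ' => deriv (fun u' => F u' θ') u)
        = fun θ' => (![deriv a u * cos θ', deriv a u * sin θ',
          (a u + u * deriv a u) * cos (2 * θ'),
          (a u + u * deriv a u) * sin (2 * θ'), deriv c u] : Fin 5 → ℝ) := by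
      funext θ'
      have := congrFun (inner1 θ') u
      simpa using this
    rw [this]; exact (L4 θ).deriv
  have e5 : deriv (fun θ' => deriv (fun θ'' => F u θ'') θ') θ
      = ![-(a u * cos θ), -(a u * sin θ), -(4 * (u * a u) * cos (2 * θ)),
        -(4 * (u * a u) * sin (2 * θ)), 0] := by
    have : (fun θ' => deriv (fun θ'' => F u θ'') θ')
        = fun θ' => (![-(a u * sin θ'), a u * cos θ',
          -(2 * (u * a u) * sin (2 * θ')), 2 * (u * a u) * cos (2 * θ'), 0] : Fin 5 → ℝ) := by
      funext θ'; simp only [hF]; exact (L2 θ').deriv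
    rw [this]; exact (L5 θ).deriv
  have hdet : (Matrix.of
      ![deriv (fun u' => F u' θ) u,
        deriv (fun θ' => F u θ') θ,
        deriv (fun u' => deriv (fun u'' => F u'' θ) u') u,
        deriv (fun θ' => deriv (fun u' => F u' θ') u) θ,
        deriv (fun θ' => deriv (fun θ'' => F u θ'') θ') θ]).det
      = -2 * (a u) ^ 3 *
        ((a u - 3 * u * deriv a u) * deriv (deriv c) u
          + (3 * u * deriv (deriv a) u - 2 * deriv a u) * deriv c u) := by
    rw [e1, e2, e3, e4, e5]
    exact det5_aux (a u) (deriv a u) (deriv (deriv a) u) (deriv c u) (deriv (deriv c) u) u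
      (cos θ) (sin θ) (cos (2 * θ)) (sin (2 * θ))
      (sin_sq_add_cos_sq θ) (sin_sq_add_cos_sq (2 * θ))
  refine ⟨hdet, ?_⟩
  have hiff : LinearIndependent ℝ
        ![deriv (fun u' => F u' θ) u,
          deriv (fun θ' => F u θ') θ,
          deriv (fun u' => deriv (fun u'' => F u'' θ) u') u,
          deriv (fun θ' => deriv (fun u' => F u' θ') u) θ,
          deriv (fun θ' => deriv (fun θ'' => F u θ'') θ') θ]
      ↔ (Matrix.of
        ![deriv (fun u' => F u' θ) u,
          deriv (fun θ' => F u θ') θ,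
          deriv (fun u' => deriv (fun u'' => F u'' θ) u') u,
          deriv (fun θ' => deriv (fun u' => F u' θ') u) θ,
          deriv (fun θ' => deriv (fun θ'' => F u θ'') θ') θ]).det ≠ 0 := by
    rw [← isUnit_iff_ne_zero, ← Matrix.isUnit_iff_isUnit_det]
    exact Matrix.linearIndependent_rows_iff_isUnit
  rw [hiff, hdet]
  constructor
  · intro h
    refine ⟨fun h0 => h (by rw [h0]; ring), fun h0 => h (by rw [h0]; ring)⟩
  · rintro ⟨h1, h2⟩ h
    rcases mul_eq_zero.mp h with h' | h'
    · rcases mul_eq_zero.mp h' with h'' | h''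
      · norm_num at h''
      · exact h1 (pow_eq_zero_iff (by norm_num) |>.mp h'')
    · exact h2 h'
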